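/- Uniqueness for the degenerate parabolic problem (Section 5.7): Let κ > 0, T > 0, let ρ₀ : [0,1] → ℝ be continuously differentiable with ρ₀ > 0 on (0,1) and ρ₀(0) = ρ₀(1) = 0, and let δv : [0,T] × [0,1] → ℝ be twice continuously differentiable with δv(0,x) = 0 for all x ∈ [0,1] and ρ₀(x) ∂ₜδv(t,x) = κ ∂ₓ( ρ₀(x)² ∂ₓδv(t,x) ) for all (t,x) ∈ [0,T] × [0,1]. Then δv(t,x) = 0 for all t ∈ [0,T] and all x ∈ (0,1). -/

import Mathlib

open Set MeasureTheory intervalIntegral Metric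

/-- Uniqueness for the degenerate parabolic problem (Section 5.7). -/
theorem parabolic_uniqueness (κ T : ℝ) (hκ : 0 < κ) (hT : 0 < T)
    (ρ₀ : ℝ → ℝ) (hρ : ContDiffOn ℝ 1 ρ₀ (Set.Icc 0 1))
    (hpos : ∀ x ∈ Set.Ioo (0:ℝ) 1, 0 < ρ₀ x)
    (h0 : ρ₀ 0 = 0) (h1 : ρ₀ 1 = 0)
    (δv : ℝ → ℝ → ℝ)
    (hδv : ContDiffOn ℝ 2 (fun p : ℝ × ℝ => δv p.1 p.2) (Set.Icc 0 T ×ˢ Set.Icc 0 1))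
    (hinit : ∀ x ∈ Set.Icc (0:ℝ) 1, δv 0 x = 0)
    (hpde : ∀ t ∈ Set.Icc 0 T, ∀ x ∈ Set.Icc (0:ℝ) 1,
      ρ₀ x * derivWithin (fun s => δv s x) (Set.Icc 0 T) t =
        κ * derivWithin
          (fun y => ρ₀ y ^ 2 * derivWithin (fun z => δv t z) (Set.Icc 0 1) y)
          (Set.Icc 0 1) x) :
    ∀ t ∈ Set.Icc 0 T, ∀ x ∈ Set.Ioo (0:ℝ) 1, δv t x = 0 := by
  set F : ℝ × ℝ → ℝ := fun p => δv p.1 p.2 with hFdef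
  set S : Set (ℝ × ℝ) := Set.Icc 0 T ×ˢ Set.Icc (0:ℝ) 1 with hSdef
  have hUS : UniqueDiffOn ℝ S := (uniqueDiffOn_Icc hT).prod (uniqueDiffOn_Icc one_pos)
  have hSc : IsCompact S := isCompact_Icc.prod isCompact_Icc
  -- clamps
  set ψ : ℝ → ℝ := fun x => max 0 (min x 1) with hψdef
  set φ : ℝ → ℝ := fun t => max 0 (min t T) with hφdef
  have hψc : Continuous ψ := continuous_const.max (continuous_id.min continuous_const)
  have hφc : Continuous φ := continuous_const.max (continuous_id.min continuous_const)
  have hψmem : ∀ x, ψ x ∈ Icc (0:ℝ) 1 := fun x =>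
    ⟨le_max_left _ _, max_le (by norm_num) (min_le_right _ _)⟩
  have hφmem : ∀ t, φ t ∈ Icc (0:ℝ) T := fun t =>
    ⟨le_max_left _ _, max_le hT.le (min_le_right _ _)⟩
  have hψeq : ∀ x ∈ Icc (0:ℝ) 1, ψ x = x := fun x hx => by
    simp [hψdef, min_eq_left hx.2, max_eq_right hx.1]
  have hφeq : ∀ t ∈ Icc (0:ℝ) T, φ t = t := fun t ht => by
    simp [hφdef, min_eq_left ht.2, max_eq_right ht.1]
  have hclampc : Continuous (fun p : ℝ × ℝ => (φ p.1, ψ p.2)) :=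
    (hφc.comp continuous_fst).prodMk (hψc.comp continuous_snd)
  have hclampmem : ∀ p : ℝ × ℝ, (φ p.1, ψ p.2) ∈ S := fun p =>
    Set.mk_mem_prod (hφmem p.1) (hψmem p.2)
  -- partial derivatives
  set D : ℝ × ℝ → ℝ := fun p => fderivWithin ℝ F S p (1, 0) with hDdef
  set Dx : ℝ × ℝ → ℝ := fun p => fderivWithin ℝ F S p (0, 1) with hDxdef
  have hfd : ContinuousOn (fderivWithin ℝ F S) S :=
    hδv.continuousOn_fderivWithin hUS (by norm_num)
  have hDcont : ContinuousOn D S := hfd.clm_apply continuousOn_const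
  have hDxcont : ContinuousOn Dx S := hfd.clm_apply continuousOn_const
  have hFc : ContinuousOn F S := hδv.continuousOn
  have hdiffS : ∀ p ∈ S, DifferentiableWithinAt ℝ F S p := fun p hp =>
    (hδv.differentiableOn (by norm_num)) p hp
  -- time slice derivative
  have hDt : ∀ t ∈ Icc (0:ℝ) T, ∀ x ∈ Icc (0:ℝ) 1,
      HasDerivWithinAt (fun s => δv s x) (D (t, x)) (Icc 0 T) t := by
    intro t ht x hx
    have hcurve : HasDerivWithinAt (fun s : ℝ => (s, x)) ((1:ℝ), (0:ℝ)) (Icc 0 T) t :=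
      ((hasDerivAt_id t).prodMk (hasDerivAt_const t x)).hasDerivWithinAt
    exact (hdiffS _ (Set.mk_mem_prod ht hx)).hasFDerivWithinAt.comp_hasDerivWithinAt t hcurve
      (fun s hs => Set.mk_mem_prod hs hx)
  have hDteq : ∀ t ∈ Icc (0:ℝ) T, ∀ x ∈ Icc (0:ℝ) 1,
      derivWithin (fun s => δv s x) (Icc 0 T) t = D (t, x) := fun t ht x hx =>
    (hDt t ht x hx).derivWithin (uniqueDiffOn_Icc hT t ht)
  -- space slice derivative
  have hDx : ∀ t ∈ Icc (0:ℝ) T, ∀ x ∈ Icc (0:ℝ) 1,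
      HasDerivWithinAt (fun z => δv t z) (Dx (t, x)) (Icc 0 1) x := by
    intro t ht x hx
    have hcurve : HasDerivWithinAt (fun z : ℝ => (t, z)) ((0:ℝ), (1:ℝ)) (Icc 0 1) x :=
      ((hasDerivAt_const x t).prodMk (hasDerivAt_id x)).hasDerivWithinAt
    exact (hdiffS _ (Set.mk_mem_prod ht hx)).hasFDerivWithinAt.comp_hasDerivWithinAt x hcurve
      (fun z hz => Set.mk_mem_prod ht hz)
  have hDxeq : ∀ t ∈ Icc (0:ℝ) T, ∀ x ∈ Icc (0:ℝ) 1,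
      derivWithin (fun z => δv t z) (Icc 0 1) x = Dx (t, x) := fun t ht x hx =>
    (hDx t ht x hx).derivWithin (uniqueDiffOn_Icc one_pos x hx)
  -- PDE rewritten
  have hpde' : ∀ t ∈ Icc (0:ℝ) T, ∀ x ∈ Icc (0:ℝ) 1,
      ρ₀ x * D (t, x) = κ * derivWithin
        (fun y => ρ₀ y ^ 2 * derivWithin (fun z => δv t z) (Icc 0 1) y) (Icc 0 1) x := by
    intro t ht x hx
    rw [← hDteq t ht x hx]
    exact hpde t ht x hx
  -- slice regularity
  have hslice : ∀ t ∈ Icc (0:ℝ) T, ContDiffOn ℝ 2 (fun z => δv t z) (Icc 0 1) := by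
    intro t ht
    exact hδv.comp (contDiff_const.prodMk contDiff_id).contDiffOn
      (fun z hz => Set.mk_mem_prod ht hz)
  -- nonnegativity of ρ₀
  have hρ0nn : ∀ x ∈ Icc (0:ℝ) 1, 0 ≤ ρ₀ x := by
    intro x hx
    rcases eq_or_lt_of_le hx.1 with h | h
    · rw [← h, h0]
    rcases eq_or_lt_of_le hx.2 with h' | h'
    · rw [h', h1]
    · exact (hpos x ⟨h, h'⟩).le
  -- globalized continuous functions
  set P : ℝ → ℝ := fun x => ρ₀ (ψ x) with hPdef
  have hPc : Continuous P := hρ.continuousOn.comp_continuous hψc hψmem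
  set V : ℝ → ℝ → ℝ := fun t x => δv (φ t) (ψ x) with hVdef
  have hVc : Continuous (fun p : ℝ × ℝ => V p.1 p.2) :=
    hFc.comp_continuous hclampc hclampmem
  set W : ℝ → ℝ → ℝ := fun s x => 2 * P x * V s x * D (φ s, ψ x) with hWdef
  have hWc : Continuous (fun p : ℝ × ℝ => W p.1 p.2) := by
    have hDcl : Continuous (fun p : ℝ × ℝ => D (φ p.1, ψ p.2)) :=
      hDcont.comp_continuous hclampc hclampmem
    exact ((continuous_const.mul (hPc.comp continuous_snd)).mul hVc).mul hDcl
  -- uniform bound for W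
  obtain ⟨M, hM⟩ : ∃ M, ∀ s x : ℝ, ‖W s x‖ ≤ M := by
    obtain ⟨M, hM⟩ := hSc.exists_bound_of_continuousOn
      (f := fun p : ℝ × ℝ => 2 * ρ₀ p.2 * F p * D p)
      (((continuousOn_const.mul (hρ.continuousOn.comp continuousOn_snd (fun p hp => hp.2))).mul
        hFc).mul hDcont)
    exact ⟨M, fun s x => hM _ (hclampmem (s, x))⟩
  -- energy functional
  set E : ℝ → ℝ := fun t => ∫ x in (0:ℝ)..1, P x * V t x ^ 2 with hEdef
  have hGc : Continuous (Function.uncurry fun t x => P x * V t x ^ 2) := by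
    have : Continuous (fun p : ℝ × ℝ => P p.2 * V p.1 p.2 ^ 2) :=
      (hPc.comp continuous_snd).mul (hVc.pow 2)
    exact this
  have hEcont : Continuous E :=
    continuous_parametric_intervalIntegral_of_continuous' hGc 0 1
  -- derivative of the energy
  have hEderiv : ∀ t₀ ∈ Ioo (0:ℝ) T, HasDerivAt E (∫ x in (0:ℝ)..1, W t₀ x) t₀ := by
    intro t₀ ht₀
    set ε : ℝ := min t₀ (T - t₀) with hεdef
    have hε : 0 < ε := lt_min ht₀.1 (sub_pos.2 ht₀.2)
    have hball : Metric.ball t₀ ε ⊆ Ioo 0 T := by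
      intro s hs
      rw [Metric.mem_ball, Real.dist_eq, abs_lt] at hs
      constructor
      · have := hs.1; have h1 := min_le_left t₀ (T - t₀); linarith
      · have := hs.2; have h2 := min_le_right t₀ (T - t₀); linarith
    have h_diff : ∀ᵐ x : ℝ ∂volume, x ∈ Set.uIoc (0:ℝ) 1 → ∀ s ∈ Metric.ball t₀ ε,
        HasDerivAt (fun s' => P x * V s' x ^ 2) (W s x) s := by
      have h1 : ∀ᵐ x : ℝ ∂volume, x ≠ 1 := by
        have := Real.volume_singleton (a := 1)
        rw [ae_iff]
        convert this using 2
        ext x; simp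
      filter_upwards [h1] with x hx1 hmem s hs
      rw [Set.uIoc_of_le zero_le_one] at hmem
      have hxIoo : x ∈ Ioo (0:ℝ) 1 := ⟨hmem.1, lt_of_le_of_ne hmem.2 hx1⟩
      have hxIcc : x ∈ Icc (0:ℝ) 1 := Ioo_subset_Icc_self hxIoo
      have hsIoo : s ∈ Ioo (0:ℝ) T := hball hs
      have hsIcc : s ∈ Icc (0:ℝ) T := Ioo_subset_Icc_self hsIoo
      have hder : HasDerivAt (fun s' => δv s' x) (D (s, x)) s :=
        (hDt s hsIcc x hxIcc).hasDerivAt (Icc_mem_nhds hsIoo.1 hsIoo.2)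
      have h2 : HasDerivAt (fun s' => P x * δv s' x ^ 2)
          (P x * (2 * δv s x ^ 1 * D (s, x))) s := by
        simpa using ((hder.pow 2).const_mul (P x))
      have heq : (fun s' => P x * V s' x ^ 2) =ᶠ[nhds s] (fun s' => P x * δv s' x ^ 2) := by
        filter_upwards [isOpen_Ioo.mem_nhds hsIoo] with s' hs'
        rw [hVdef]
        simp only
        rw [hφeq s' (Ioo_subset_Icc_self hs'), hψeq x hxIcc]
      have h3 := h2.congr_of_eventuallyEq heq
      refine h3.congr_deriv ?_
      rw [hWdef, hVdef]
      simp only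
      rw [hφeq s hsIcc, hψeq x hxIcc]
      ring
    have h_bound : ∀ᵐ x : ℝ ∂volume, x ∈ Set.uIoc (0:ℝ) 1 → ∀ s ∈ Metric.ball t₀ ε,
        ‖W s x‖ ≤ M := Filter.Eventually.of_forall fun x _ s _ => hM s x
    have key := intervalIntegral.hasDerivAt_integral_of_dominated_loc_of_deriv_le
      (F := fun s x => P x * V s x ^ 2) (F' := W) (x₀ := t₀) (a := 0) (b := 1)
      (bound := fun _ => M) (Metric.ball_mem_nhds t₀ hε)
      (Filter.Eventually.of_forall fun s =>
        ((hPc.mul ((hVc.comp (continuous_const.prodMk continuous_id)).pow 2)).aestronglyMeasurable).restrict)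
      (((hPc.mul ((hVc.comp (continuous_const.prodMk continuous_id)).pow 2))).intervalIntegrable 0 1)
      ((hWc.comp (continuous_const.prodMk continuous_id)).aestronglyMeasurable).restrict
      h_bound intervalIntegrable_const h_diff
    exact key.2
  -- the derivative is nonpositive
  have hEnonpos : ∀ t₀ ∈ Ioo (0:ℝ) T, (∫ x in (0:ℝ)..1, W t₀ x) ≤ 0 := by
    intro t₀ ht₀
    have ht₀Icc : t₀ ∈ Icc (0:ℝ) T := Ioo_subset_Icc_self ht₀
    set u : ℝ → ℝ := fun x => δv t₀ x with hudef
    set g : ℝ → ℝ := fun y => ρ₀ y ^ 2 * derivWithin (fun z => δv t₀ z) (Icc 0 1) y with hgdef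
    set f : ℝ → ℝ := fun x => derivWithin g (Icc 0 1) x with hfdef
    -- continuity facts on [0,1]
    have hucont : ContinuousOn u (Icc 0 1) := (hslice t₀ ht₀Icc).continuousOn
    have hDxt : ContinuousOn (fun x => Dx (t₀, x)) (Icc 0 1) :=
      hDxcont.comp (continuous_const.prodMk continuous_id).continuousOn
        (fun x hx => Set.mk_mem_prod ht₀Icc hx)
    have hwcont : ContinuousOn (fun x => derivWithin (fun z => δv t₀ z) (Icc 0 1) x) (Icc 0 1) :=
      hDxt.congr (fun x hx => hDxeq t₀ ht₀Icc x hx)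
    have hgcont : ContinuousOn g (Icc 0 1) :=
      ((hρ.continuousOn).pow 2).mul hwcont
    have hDt₀ : ContinuousOn (fun x => D (t₀, x)) (Icc 0 1) :=
      hDcont.comp (continuous_const.prodMk continuous_id).continuousOn
        (fun x hx => Set.mk_mem_prod ht₀Icc hx)
    have hfeq : ∀ x ∈ Icc (0:ℝ) 1, f x = κ⁻¹ * (ρ₀ x * D (t₀, x)) := by
      intro x hx
      have hp := hpde' t₀ ht₀Icc x hx
      rw [hfdef, hgdef]
      simp only
      rw [hp, ← mul_assoc, inv_mul_cancel₀ hκ.ne', one_mul]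
    have hfcont : ContinuousOn f (Icc 0 1) :=
      (continuousOn_const.mul ((hρ.continuousOn).mul hDt₀)).congr hfeq
    -- g is differentiable within Icc
    have hgdiff : DifferentiableOn ℝ g (Icc 0 1) := by
      have hw : ContDiffOn ℝ 1 (derivWithin (fun z => δv t₀ z) (Icc 0 1)) (Icc 0 1) :=
        (hslice t₀ ht₀Icc).derivWithin (uniqueDiffOn_Icc one_pos) (by norm_num)
      exact ((hρ.differentiableOn one_ne_zero).pow 2).mul (hw.differentiableOn one_ne_zero)
    -- integration by parts
    set H : ℝ → ℝ := fun x => u x * g x with hHdef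
    set h : ℝ → ℝ := fun x => Dx (t₀, x) * g x + u x * f x with hhdef
    have hHcont : ContinuousOn H (Icc 0 1) := hucont.mul hgcont
    have hHderiv : ∀ x ∈ Ioo (0:ℝ) 1, HasDerivAt H (h x) x := by
      intro x hx
      have hxIcc : x ∈ Icc (0:ℝ) 1 := Ioo_subset_Icc_self hx
      have hu : HasDerivAt u (Dx (t₀, x)) x :=
        (hDx t₀ ht₀Icc x hxIcc).hasDerivAt (Icc_mem_nhds hx.1 hx.2)
      have hg : HasDerivAt g (f x) x := by
        have := (hgdiff x hxIcc).hasDerivWithinAt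
        exact this.hasDerivAt (Icc_mem_nhds hx.1 hx.2)
      exact hu.mul hg
    have hhint : IntervalIntegrable h volume 0 1 := by
      have : ContinuousOn h (Icc 0 1) := (hDxt.mul hgcont).add (hucont.mul hfcont)
      exact this.intervalIntegrable_of_Icc zero_le_one
    have hFTC : (∫ x in (0:ℝ)..1, h x) = H 1 - H 0 :=
      intervalIntegral.integral_eq_sub_of_hasDeriv_right_of_le zero_le_one hHcont
        (fun x hx => (hHderiv x hx).hasDerivWithinAt) hhint
    have hH1 : H 1 = 0 := by
      simp [hHdef, hgdef, h1]
    have hH0 : H 0 = 0 := by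
      simp [hHdef, hgdef, h0]
    have hsplit : (∫ x in (0:ℝ)..1, h x) =
        (∫ x in (0:ℝ)..1, Dx (t₀, x) * g x) + ∫ x in (0:ℝ)..1, u x * f x := by
      rw [hhdef]
      exact intervalIntegral.integral_add
        ((hDxt.mul hgcont).intervalIntegrable_of_Icc zero_le_one)
        ((hucont.mul hfcont).intervalIntegrable_of_Icc zero_le_one)
    have hpos1 : 0 ≤ ∫ x in (0:ℝ)..1, Dx (t₀, x) * g x := by
      apply intervalIntegral.integral_nonneg zero_le_one
      intro x hx
      have : Dx (t₀, x) * g x = ρ₀ x ^ 2 * Dx (t₀, x) ^ 2 := by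
        rw [hgdef]
        simp only
        rw [hDxeq t₀ ht₀Icc x hx]
        ring
      rw [this]
      positivity
    have huf : (∫ x in (0:ℝ)..1, u x * f x) ≤ 0 := by
      have : (∫ x in (0:ℝ)..1, u x * f x) = - ∫ x in (0:ℝ)..1, Dx (t₀, x) * g x := by
        have := hsplit.symm.trans (hFTC.trans (show H 1 - H 0 = 0 by rw [hH1, hH0]; exact sub_self 0))
        linarith
      rw [this]
      linarith
    -- identify ∫ W t₀ with 2κ ∫ u f
    have hWeq : ∀ x ∈ Icc (0:ℝ) 1, W t₀ x = 2 * κ * (u x * f x) := by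
      intro x hx
      rw [hWdef, hVdef, hPdef]
      simp only
      rw [hφeq t₀ ht₀Icc, hψeq x hx]
      have hpdex := hpde' t₀ ht₀Icc x hx
      have : ρ₀ x * D (t₀, x) = κ * f x := by rw [hpdex]
      calc 2 * ρ₀ x * δv t₀ x * D (t₀, x) = 2 * δv t₀ x * (ρ₀ x * D (t₀, x)) := by ring
        _ = 2 * δv t₀ x * (κ * f x) := by rw [this]
        _ = 2 * κ * (u x * f x) := by rw [hudef]; ring
    have : (∫ x in (0:ℝ)..1, W t₀ x) = 2 * κ * ∫ x in (0:ℝ)..1, u x * f x := by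
      rw [← intervalIntegral.integral_const_mul]
      apply intervalIntegral.integral_congr
      intro x hx
      rw [Set.uIcc_of_le zero_le_one] at hx
      exact hWeq x hx
    rw [this]
    have h2κ : (0:ℝ) < 2 * κ := by linarith
    exact mul_nonpos_of_nonneg_of_nonpos h2κ.le huf
  -- E is antitone on [0, T]
  have hEanti : AntitoneOn E (Icc 0 T) := by
    apply antitoneOn_of_deriv_nonpos (convex_Icc 0 T) hEcont.continuousOn
    · intro t ht
      rw [interior_Icc] at ht
      exact (hEderiv t ht).differentiableAt.differentiableWithinAt
    · intro t ht
      rw [interior_Icc] at ht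
      rw [(hEderiv t ht).deriv]
      exact hEnonpos t ht
  -- E 0 = 0
  have hE0 : E 0 = 0 := by
    rw [hEdef]
    simp only
    have : ∀ x : ℝ, P x * V 0 x ^ 2 = 0 := by
      intro x
      have : V 0 x = 0 := by
        rw [hVdef]
        simp only
        rw [hφeq 0 (left_mem_Icc.2 hT.le)]
        exact hinit (ψ x) (hψmem x)
      rw [this]; ring
    simp only [this, intervalIntegral.integral_zero]
  -- E nonneg
  have hEnn : ∀ t, 0 ≤ E t := by
    intro t
    apply intervalIntegral.integral_nonneg zero_le_one
    intro x _
    exact mul_nonneg (hρ0nn (ψ x) (hψmem x)) (sq_nonneg _)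
  -- E vanishes on [0, T]
  have hEzero : ∀ t ∈ Icc (0:ℝ) T, E t = 0 := by
    intro t ht
    have h1 := hEanti (left_mem_Icc.2 hT.le) ht ht.1
    rw [hE0] at h1
    exact le_antisymm h1 (hEnn t)
  -- conclusion
  intro t ht x₀ hx₀
  by_contra hne
  have hx₀Icc : x₀ ∈ Icc (0:ℝ) 1 := Ioo_subset_Icc_self hx₀
  set G : ℝ → ℝ := fun x => P x * V t x ^ 2 with hGdef
  have hGcont : Continuous G :=
    hPc.mul ((hVc.comp (continuous_const.prodMk continuous_id)).pow 2)
  have hGnn : ∀ x, 0 ≤ G x := fun x =>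
    mul_nonneg (hρ0nn (ψ x) (hψmem x)) (sq_nonneg _)
  have hGx₀ : 0 < G x₀ := by
    rw [hGdef, hVdef, hPdef]
    simp only
    rw [hφeq t ht, hψeq x₀ hx₀Icc]
    exact mul_pos (hpos x₀ hx₀)
      (lt_of_le_of_ne (sq_nonneg _) (Ne.symm (pow_ne_zero 2 hne)))
  have hEt : E t = ∫ x in (0:ℝ)..1, G x := rfl
  set c : ℝ := G x₀ with hcdef
  obtain ⟨δ, hδpos, hδ⟩ := Metric.continuousAt_iff.mp hGcont.continuousAt (c / 2)
    (by positivity)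
  set r : ℝ := min δ (min x₀ (1 - x₀)) with hrdef
  have hrδ : r ≤ δ := min_le_left _ _
  have hrx₀ : r ≤ x₀ := (min_le_right _ _).trans (min_le_left _ _)
  have hrx₁ : r ≤ 1 - x₀ := (min_le_right _ _).trans (min_le_right _ _)
  have hr : 0 < r := lt_min hδpos (lt_min hx₀.1 (by linarith [hx₀.2]))
  set a : ℝ := x₀ - r / 2 with hadef
  set b : ℝ := x₀ + r / 2 with hbdef
  have hab : a < b := by rw [hadef, hbdef]; linarith
  have h0a : (0:ℝ) ≤ a := by rw [hadef]; linarith [hx₀.1]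
  have hb1 : b ≤ 1 := by rw [hbdef]; linarith
  have hlb : ∀ x ∈ Icc a b, c / 2 ≤ G x := by
    intro x hx
    have hdist : dist x x₀ < δ := by
      rw [Real.dist_eq, abs_lt]
      rw [hadef] at hx; rw [hbdef] at hx
      constructor <;> [skip; skip] <;> (first | linarith [hx.1, hx.2])
    have hd := hδ hdist
    rw [Real.dist_eq] at hd
    have := abs_lt.mp hd
    rw [← hcdef] at this
    linarith [this.1]
  have int0a : IntervalIntegrable G volume 0 a := hGcont.intervalIntegrable 0 a
  have intab : IntervalIntegrable G volume a b := hGcont.intervalIntegrable a b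
  have intb1 : IntervalIntegrable G volume b 1 := hGcont.intervalIntegrable b 1
  have hmid : c / 2 * (b - a) ≤ ∫ x in a..b, G x := by
    have h := intervalIntegral.integral_mono_on (μ := volume) hab.le
      intervalIntegrable_const intab hlb
    rw [intervalIntegral.integral_const, smul_eq_mul] at h
    calc c / 2 * (b - a) = (b - a) * (c / 2) := by ring
      _ ≤ _ := h
  have hI0a : 0 ≤ ∫ x in (0:ℝ)..a, G x :=
    intervalIntegral.integral_nonneg h0a (fun x _ => hGnn x)
  have hIb1 : 0 ≤ ∫ x in b..1, G x :=
    intervalIntegral.integral_nonneg hb1 (fun x _ => hGnn x)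
  have hsplitE : E t = (∫ x in (0:ℝ)..a, G x) + (∫ x in a..b, G x) + ∫ x in b..1, G x := by
    rw [hEt, ← intervalIntegral.integral_add_adjacent_intervals (int0a.trans intab) intb1,
      ← intervalIntegral.integral_add_adjacent_intervals int0a intab]
  have hmidpos : 0 < c / 2 * (b - a) := by
    have : 0 < b - a := by linarith
    positivity
  have hEpos : 0 < E t := by
    rw [hsplitE]
    linarith
  rw [hEzero t ht] at hEpos
  exact lt_irrefl 0 hEpos
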